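/- For all real s,t > 0, θ ∈ (0,1) and k ∈ ℕ, the discrete duality polynomials have geometric 'moments' with respect to the discrete Gamma distribution: Σ_{n≥k} (Γ(n+1)/Γ(n−k+1)) · (Γ(s+t)/Γ(s+t+k)) · (1−θ)^{s+t} θ^n Γ(s+t+n)/(Γ(s+t) n!) = (θ/(1−θ))^k. That is, Σ_n d_{s,t}(k,n) ν_θ^{s+t}(n) = ρ(θ)^k with ρ(θ) = θ/(1−θ). -/

import Mathlib

open Real

/-- Discrete duality polynomial `d_{s,t}(k,n) = Γ(n+1)Γ(s+t)/(Γ(n−k+1)Γ(s+t+k))` for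
`n ≥ k`, and 0 for `n < k`. -/
noncomputable def dDisc (s t : ℝ) (k n : ℕ) : ℝ :=
  if k ≤ n then
    Real.Gamma ((n : ℝ) + 1) * Real.Gamma (s + t) /
      (Real.Gamma (((n - k : ℕ) : ℝ) + 1) * Real.Gamma (s + t + k))
  else 0

/-- Discrete Gamma distribution with shape `s+t` and parameter `θ ∈ (0,1)`. -/
noncomputable def nuDisc (s t θ : ℝ) (n : ℕ) : ℝ :=
  (1 - θ) ^ (s + t) * θ ^ n * Real.Gamma (s + t + n) /
    (Real.Gamma (s + t) * (Nat.factorial n : ℝ))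

open MeasureTheory Set Filter

lemma negBinom_pos {a θ : ℝ} (ha : 0 < a) (h0 : 0 < θ) (m : ℕ) :
    0 < θ ^ m * Real.Gamma (a + m) / (Nat.factorial m * Real.Gamma a) := by
  have h1 : 0 < Real.Gamma (a + m) := Real.Gamma_pos_of_pos (by positivity)
  have h2 : 0 < Real.Gamma a := Real.Gamma_pos_of_pos ha
  have h3 : 0 < (Nat.factorial m : ℝ) := by positivity
  positivity

lemma negBinom_summable {a θ : ℝ} (ha : 0 < a) (h0 : 0 < θ) (h1 : θ < 1) :
    Summable (fun m : ℕ => θ ^ m * Real.Gamma (a + m) / (Nat.factorial m * Real.Gamma a)) := by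
  apply summable_of_ratio_test_tendsto_lt_one h1
    (Filter.Eventually.of_forall fun m => (negBinom_pos ha h0 m).ne')
  have key : ∀ m : ℕ, ‖θ ^ (m+1) * Real.Gamma (a + ↑(m+1)) / (Nat.factorial (m+1) * Real.Gamma a)‖ /
      ‖θ ^ m * Real.Gamma (a + m) / (Nat.factorial m * Real.Gamma a)‖
      = θ * (1 + (a - 1) / (m + 1)) := by
    intro m
    have hΓ : 0 < Real.Gamma (a + m) := Real.Gamma_pos_of_pos (by positivity)
    have hΓa : 0 < Real.Gamma a := Real.Gamma_pos_of_pos ha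
    have hf : 0 < (Nat.factorial m : ℝ) := by positivity
    have hG1 : Real.Gamma (a + ↑(m+1)) = (a + m) * Real.Gamma (a + m) := by
      have : a + ↑(m+1) = (a + m) + 1 := by push_cast; ring
      rw [this, Real.Gamma_add_one (by positivity)]
    have hfac : (Nat.factorial (m+1) : ℝ) = (m + 1) * Nat.factorial m := by
      rw [Nat.factorial_succ]; push_cast; ring
    rw [Real.norm_of_nonneg (negBinom_pos ha h0 (m+1)).le,
      Real.norm_of_nonneg (negBinom_pos ha h0 m).le, hG1, hfac]
    have hm1 : (0:ℝ) < (m:ℝ) + 1 := by positivity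
    field_simp
    ring
  simp_rw [key]
  have : Tendsto (fun m : ℕ => θ * (1 + (a - 1) / (m + 1))) atTop (nhds (θ * (1 + 0))) := by
    have h2 : Tendsto (fun m : ℕ => (a - 1) / (m + 1 : ℝ)) atTop (nhds 0) := by
      have := tendsto_one_div_add_atTop_nhds_zero_nat.const_mul (a-1)
      simpa [div_eq_mul_inv, mul_comm] using this
    exact (tendsto_const_nhds.add h2).const_mul θ
  simpa using this


lemma negBinom_tsum {a θ : ℝ} (ha : 0 < a) (h0 : 0 < θ) (h1 : θ < 1) :
    ∑' m : ℕ, θ ^ m * Real.Gamma (a + m) / (Nat.factorial m * Real.Gamma a)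
      = (1 - θ) ^ (-a) := by
  have hΓa : 0 < Real.Gamma a := Real.Gamma_pos_of_pos ha
  have h1θ : 0 < 1 - θ := by linarith
  set f : ℕ → ℝ → ℝ := fun m x =>
    (θ ^ m / (Nat.factorial m * Real.Gamma a)) * (Real.exp (-x) * x ^ (a + m - 1)) with hf
  have hpos : ∀ m : ℕ, (0:ℝ) < a + m := fun m => by positivity
  have hint : ∀ m : ℕ, IntegrableOn (f m) (Ioi 0) := fun m =>
    (Real.GammaIntegral_convergent (hpos m)).const_mul _
  have hnn : ∀ m : ℕ, 0 ≤ᵐ[volume.restrict (Ioi 0)] f m := by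
    intro m
    filter_upwards [ae_restrict_mem measurableSet_Ioi] with x hx
    have hx0 : (0:ℝ) ≤ x := le_of_lt hx
    have : 0 ≤ x ^ (a + m - 1) := Real.rpow_nonneg hx0 _
    have hfm : (0:ℝ) < (Nat.factorial m : ℝ) := by positivity
    positivity
  have hval : ∀ m : ℕ, ∫ x in Ioi 0, f m x
      = θ ^ m * Real.Gamma (a + m) / (Nat.factorial m * Real.Gamma a) := by
    intro m
    rw [hf]
    simp only
    rw [MeasureTheory.integral_const_mul, ← Real.Gamma_eq_integral (hpos m)]
    ring
  have hf' : ∑' m : ℕ, ∫⁻ x in Ioi 0, ‖f m x‖₊ ≠ ⊤ := by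
    have heq : ∀ m : ℕ, ∫⁻ x in Ioi 0, (‖f m x‖₊ : ENNReal)
        = ENNReal.ofReal (θ ^ m * Real.Gamma (a + m) / (Nat.factorial m * Real.Gamma a)) := by
      intro m
      rw [← hval m, MeasureTheory.ofReal_integral_eq_lintegral_ofReal (hint m) (hnn m)]
      refine lintegral_congr_ae ?_
      filter_upwards [hnn m] with x hx
      rw [← enorm_eq_nnnorm, Real.enorm_eq_ofReal hx]
    simp_rw [heq]
    rw [← ENNReal.ofReal_tsum_of_nonneg (fun m => (negBinom_pos ha h0 m).le)
      (negBinom_summable ha h0 h1)]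
    exact ENNReal.ofReal_ne_top
  have hswap := MeasureTheory.integral_tsum (fun m => (hint m).aestronglyMeasurable) hf'
  have hpt : ∀ x ∈ Ioi (0:ℝ), ∑' m : ℕ, f m x
      = Real.exp (θ * x) * (Real.exp (-x) * x ^ (a - 1) / Real.Gamma a) := by
    intro x hx
    have hx0 : (0:ℝ) < x := hx
    have hterm : ∀ m : ℕ, f m x
        = ((θ * x) ^ m / (Nat.factorial m : ℝ)) * (Real.exp (-x) * x ^ (a - 1) / Real.Gamma a) := by
      intro m
      rw [hf]
      simp only
      rw [show a + (m:ℝ) - 1 = (a - 1) + (m:ℝ) by ring, Real.rpow_add hx0,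
        Real.rpow_natCast, mul_pow]
      have hfm : (0:ℝ) < (Nat.factorial m : ℝ) := by positivity
      field_simp
    rw [tsum_congr hterm, tsum_mul_right]
    congr 1
    rw [Real.exp_eq_exp_ℝ, NormedSpace.exp_eq_tsum_div]
  calc ∑' m : ℕ, θ ^ m * Real.Gamma (a + m) / (Nat.factorial m * Real.Gamma a)
      = ∑' m : ℕ, ∫ x in Ioi 0, f m x := by
        exact tsum_congr fun m => (hval m).symm
    _ = ∫ x in Ioi 0, ∑' m : ℕ, f m x := hswap.symm
    _ = ∫ x in Ioi 0, x ^ (a - 1) * Real.exp (-((1 - θ) * x)) / Real.Gamma a := by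
        refine setIntegral_congr_fun measurableSet_Ioi fun x hx => ?_
        rw [hpt x hx, show -((1 - θ) * x) = θ * x + -x by ring, Real.exp_add]
        ring
    _ = (1 - θ) ^ (-a) := by
        rw [integral_div, Real.integral_rpow_mul_exp_neg_mul_Ioi ha h1θ,
          mul_div_assoc, div_self hΓa.ne', mul_one, one_div, Real.inv_rpow h1θ.le,
          ← Real.rpow_neg h1θ.le]

/-- The discrete duality polynomials have geometric moments with respect to
the discrete Gamma distribution: `Σ_n d_{s,t}(k,n) ν_θ^{s+t}(n) = (θ/(1−θ))^k`. -/
theorem discrete_duality_polynomial_moments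
    (s t θ : ℝ) (hs : 0 < s) (ht : 0 < t) (hθ : θ ∈ Set.Ioo (0:ℝ) 1) (k : ℕ) :
    (∑' n : ℕ, dDisc s t k n * nuDisc s t θ n) = (θ / (1 - θ)) ^ k := by
  obtain ⟨h0, h1⟩ := hθ
  have h1θ : 0 < 1 - θ := by linarith
  have hst : 0 < s + t := by linarith
  have ha : 0 < s + t + k := by positivity
  have hΓst : 0 < Real.Gamma (s + t) := Real.Gamma_pos_of_pos hst
  have hΓk : 0 < Real.Gamma (s + t + k) := Real.Gamma_pos_of_pos ha
  have hinj : Function.Injective (fun m : ℕ => m + k) := add_left_injective k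
  have hzero : Function.support (fun n => dDisc s t k n * nuDisc s t θ n)
      ⊆ Set.range (fun m : ℕ => m + k) := by
    intro n hn
    rcases le_or_gt k n with h | h
    · exact ⟨n - k, Nat.sub_add_cancel h⟩
    · exfalso
      apply hn
      simp [dDisc, not_le.mpr h]
  rw [← Function.Injective.tsum_eq hinj hzero]
  have hterm : ∀ m : ℕ, dDisc s t k (m + k) * nuDisc s t θ (m + k)
      = ((1 - θ) ^ (s + t) * θ ^ k) *
        (θ ^ m * Real.Gamma ((s + t + k) + m) / (Nat.factorial m * Real.Gamma (s + t + k))) := by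
    intro m
    have hle : k ≤ m + k := le_add_self
    rw [dDisc, if_pos hle, nuDisc, Nat.add_sub_cancel]
    have e1 : Real.Gamma ((↑(m + k) : ℝ) + 1) = (Nat.factorial (m + k) : ℝ) :=
      Real.Gamma_nat_eq_factorial (m + k)
    have e2 : Real.Gamma ((m : ℝ) + 1) = (Nat.factorial m : ℝ) :=
      Real.Gamma_nat_eq_factorial m
    have e3 : s + t + (↑(m + k) : ℝ) = (s + t + k) + m := by push_cast; ring
    rw [e1, e2, e3]
    have hfmk : (0:ℝ) < (Nat.factorial (m + k) : ℝ) := by positivity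
    have hfm : (0:ℝ) < (Nat.factorial m : ℝ) := by positivity
    have hθmk : θ ^ (m + k) = θ ^ m * θ ^ k := pow_add θ m k
    rw [hθmk]
    field_simp
  calc (∑' m : ℕ, dDisc s t k (m + k) * nuDisc s t θ (m + k))
      = ((1 - θ) ^ (s + t) * θ ^ k) *
        ∑' m : ℕ, θ ^ m * Real.Gamma ((s + t + k) + m) /
          (Nat.factorial m * Real.Gamma (s + t + k)) := by
        rw [← tsum_mul_left]
        exact tsum_congr hterm
    _ = ((1 - θ) ^ (s + t) * θ ^ k) * (1 - θ) ^ (-(s + t + k)) :=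
        by rw [negBinom_tsum ha h0 h1]
    _ = (θ / (1 - θ)) ^ k := by
        rw [mul_comm ((1 - θ) ^ (s + t)) (θ ^ k), mul_assoc, ← Real.rpow_add h1θ,
          show s + t + -(s + t + (k:ℝ)) = -(k:ℝ) by ring, Real.rpow_neg h1θ.le,
          Real.rpow_natCast, div_pow, div_eq_mul_inv]
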